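/- arXiv:1712.01366 — 2 statements merged into one kernel-verified Lean document; each statement's English description precedes it below -/
import Mathlib

section
/- For every y ∈ ℝ³ with |y| > 0 and every p < 3/2, ∫_{|x| > 2|y|} |x|^{-6+2p} e^{-|x|/2} dx ≤ C_p · |y|^{-3+2p} · e^{-|y|}. -/
open MeasureTheory Set

/-- For `p < 3/2`, `∫_{|x| > 2|y|} |x|^{-6+2p} e^{-|x|/2} dx ≤ C_p |y|^{-3+2p} e^{-|y|}`. -/

theorem integral_pow_exp_exterior (p : ℝ) (hp : p < 3 / 2) :
    ∃ C : ℝ, 0 < C ∧ ∀ y : EuclideanSpace ℝ (Fin 3), 0 < ‖y‖ →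
      ∫ x in {x : EuclideanSpace ℝ (Fin 3) | 2 * ‖y‖ < ‖x‖},
          ‖x‖ ^ (-6 + 2 * p) * Real.exp (-‖x‖ / 2) ≤
        C * ‖y‖ ^ (-3 + 2 * p) * Real.exp (-‖y‖) := by
  set V : ℝ := (volume (Metric.ball (0 : EuclideanSpace ℝ (Fin 3)) 1)).toReal with hVdef
  have hV : 0 < V := by
    rw [hVdef]
    refine ENNReal.toReal_pos (ne_of_gt (Metric.measure_ball_pos _ _ one_pos)) ?_
    exact (measure_ball_lt_top).ne
  have h32 : 0 < 3 - 2 * p := by linarith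
  refine ⟨3 * V * 2 ^ (-3 + 2 * p) / (3 - 2 * p), by positivity, fun y hy => ?_⟩
  set R : ℝ := ‖y‖ with hRdef
  have hR : 0 < R := hy
  have h2R : 0 < 2 * R := by linarith
  -- rewrite set integral as integral of indicator composed with norm
  have hS : MeasurableSet {x : EuclideanSpace ℝ (Fin 3) | 2 * ‖y‖ < ‖x‖} :=
    measurableSet_lt measurable_const measurable_norm
  set g : ℝ → ℝ := (Ioi (2 * R)).indicator (fun r => r ^ (-6 + 2 * p) * Real.exp (-r / 2))
    with hgdef
  have step1 : ∫ x in {x : EuclideanSpace ℝ (Fin 3) | 2 * ‖y‖ < ‖x‖},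
      ‖x‖ ^ (-6 + 2 * p) * Real.exp (-‖x‖ / 2) = ∫ x : EuclideanSpace ℝ (Fin 3), g ‖x‖ := by
    rw [← integral_indicator hS]
    rfl
  have dim3 : Module.finrank ℝ (EuclideanSpace ℝ (Fin 3)) = 3 := by simp
  have step2 : ∫ x : EuclideanSpace ℝ (Fin 3), g ‖x‖
      = (3:ℕ) • V • ∫ r in Ioi (0:ℝ), r ^ (3 - 1 : ℕ) • g r := by
    rw [integral_fun_norm_addHaar volume g, dim3]
    rfl
  have step3 : ∫ r in Ioi (0:ℝ), r ^ (3 - 1 : ℕ) • g r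
      = ∫ r in Ioi (2 * R), r ^ (-4 + 2 * p) * Real.exp (-r / 2) := by
    have : ∀ r : ℝ, r ^ (3 - 1 : ℕ) • g r
        = (Ioi (2 * R)).indicator (fun r => r ^ (2:ℕ) * (r ^ (-6 + 2 * p) * Real.exp (-r / 2))) r := by
      intro r
      simp [hgdef, indicator_apply, smul_eq_mul]
    simp_rw [this]
    rw [setIntegral_indicator measurableSet_Ioi]
    rw [Set.Ioi_inter_Ioi, max_eq_right h2R.le]
    refine setIntegral_congr_fun measurableSet_Ioi fun r hr => ?_
    have hrpos : 0 < r := lt_trans h2R hr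
    rw [← mul_assoc, ← Real.rpow_natCast r 2, ← Real.rpow_add hrpos]
    norm_num
    congr 1
    ring
  have hint : IntegrableOn (fun r => r ^ (-4 + 2 * p)) (Ioi (2 * R)) := by
    exact integrableOn_Ioi_rpow_of_lt (by linarith) h2R
  have step4 : ∫ r in Ioi (2 * R), r ^ (-4 + 2 * p) * Real.exp (-r / 2)
      ≤ ∫ r in Ioi (2 * R), Real.exp (-R) * r ^ (-4 + 2 * p) := by
    refine setIntegral_mono_on ?_ (hint.const_mul _) measurableSet_Ioi fun r hr => ?_
    · refine Integrable.mono' (hint.const_mul (Real.exp (-R))) ?_ ?_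
      · exact (Measurable.aestronglyMeasurable (by fun_prop)).restrict
      · filter_upwards [ae_restrict_mem measurableSet_Ioi] with r hr
        have hrpos : 0 < r := lt_trans h2R hr
        rw [Real.norm_eq_abs, abs_of_nonneg (by positivity)]
        rw [mul_comm (Real.exp (-R))]
        refine mul_le_mul_of_nonneg_left ?_ (by positivity)
        refine Real.exp_le_exp.2 ?_
        rw [Set.mem_Ioi] at hr
        linarith
    · rw [Set.mem_Ioi] at hr
      have hrpos : 0 < r := lt_trans h2R hr
      rw [mul_comm (Real.exp (-R))]
      refine mul_le_mul_of_nonneg_left (Real.exp_le_exp.2 (by linarith)) ?_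
      positivity
  have step5 : ∫ r in Ioi (2 * R), Real.exp (-R) * r ^ (-4 + 2 * p)
      = Real.exp (-R) * ((2 * R) ^ (-3 + 2 * p) / (3 - 2 * p)) := by
    rw [integral_const_mul, integral_Ioi_rpow_of_lt (by linarith) h2R]
    congr 1
    have : -4 + 2 * p + 1 = -3 + 2 * p := by ring
    rw [this, show (-3 + 2 * p : ℝ) = -(3 - 2 * p) by ring, div_neg, neg_div, neg_neg]
  calc ∫ x in {x : EuclideanSpace ℝ (Fin 3) | 2 * ‖y‖ < ‖x‖},
          ‖x‖ ^ (-6 + 2 * p) * Real.exp (-‖x‖ / 2)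
      = (3:ℕ) • V • ∫ r in Ioi (2 * R), r ^ (-4 + 2 * p) * Real.exp (-r / 2) := by
        rw [step1, step2, step3]
    _ ≤ (3:ℕ) • V • (Real.exp (-R) * ((2 * R) ^ (-3 + 2 * p) / (3 - 2 * p))) := by
        rw [nsmul_eq_mul, nsmul_eq_mul, smul_eq_mul, smul_eq_mul]
        have := step4.trans_eq step5
        nlinarith [this, hV]
    _ = 3 * V * 2 ^ (-3 + 2 * p) / (3 - 2 * p) * R ^ (-3 + 2 * p) * Real.exp (-R) := by
        rw [nsmul_eq_mul, smul_eq_mul, Real.mul_rpow (by norm_num) hR.le]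
        push_cast
        ring
end

section
/- For every y ∈ ℝ³ with y ≠ 0, ∫_C e^{-2|x-y|}/|x-y|² dx ≤ C·min(1, |y|), where C = {x : |y|/2 ≤ |x| ≤ 2|y| and |x-y| ≥ |y|/2}. -/
open MeasureTheory

/-- For `y ≠ 0`, the integral of `e^{-2|x-y|}/|x-y|²` over the annular region
`{|y|/2 ≤ |x| ≤ 2|y|} ∩ {|x-y| ≥ |y|/2}` is at most `C min(1, |y|)`. -/
theorem integral_yukawa_sq_annulus :
    ∃ C : ℝ, 0 < C ∧ ∀ y : EuclideanSpace ℝ (Fin 3), y ≠ 0 →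
      ∫ x in {x : EuclideanSpace ℝ (Fin 3) |
          ‖y‖ / 2 ≤ ‖x‖ ∧ ‖x‖ ≤ 2 * ‖y‖ ∧ ‖y‖ / 2 ≤ ‖x - y‖},
          Real.exp (-2 * ‖x - y‖) / ‖x - y‖ ^ 2 ≤ C * min 1 ‖y‖ := by
  set B : ℝ := (volume (Metric.ball (0 : EuclideanSpace ℝ (Fin 3)) 1)).toReal with hBdef
  have hBpos : 0 < B := by
    rw [hBdef]
    exact ENNReal.toReal_pos (Metric.measure_ball_pos _ _ one_pos).ne'
      measure_ball_lt_top.ne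
  refine ⟨32 * B, by positivity, ?_⟩
  intro y hy
  set r : ℝ := ‖y‖ with hrdef
  have hr : 0 < r := norm_pos_iff.2 hy
  set s : Set (EuclideanSpace ℝ (Fin 3)) :=
    {x | r / 2 ≤ ‖x‖ ∧ ‖x‖ ≤ 2 * r ∧ r / 2 ≤ ‖x - y‖} with hsdef
  have hmeas : MeasurableSet s := by
    have hseq : s = {x : EuclideanSpace ℝ (Fin 3) | r / 2 ≤ ‖x‖} ∩
        ({x | ‖x‖ ≤ 2 * r} ∩ {x | r / 2 ≤ ‖x - y‖}) := by
      ext x; simp [hsdef, Set.mem_setOf_eq, and_assoc]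
    rw [hseq]
    exact (measurableSet_le measurable_const measurable_norm).inter
      ((measurableSet_le measurable_norm measurable_const).inter
        (measurableSet_le measurable_const ((measurable_id.sub measurable_const).norm)))
  have hsub : s ⊆ Metric.closedBall (0 : EuclideanSpace ℝ (Fin 3)) (2 * r) := by
    intro x hx
    simpa [Metric.mem_closedBall, dist_zero_right] using hx.2.1
  have hvol : volume (Metric.closedBall (0 : EuclideanSpace ℝ (Fin 3)) (2 * r))
      = ENNReal.ofReal ((2 * r) ^ 3) *
        volume (Metric.ball (0 : EuclideanSpace ℝ (Fin 3)) 1) := by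
    have h := Measure.addHaar_closedBall (volume : Measure (EuclideanSpace ℝ (Fin 3)))
      0 (show (0:ℝ) ≤ 2 * r by positivity)
    simpa [finrank_euclideanSpace_fin] using h
  have hμle : volume s ≤ ENNReal.ofReal ((2 * r) ^ 3) *
      volume (Metric.ball (0 : EuclideanSpace ℝ (Fin 3)) 1) :=
    (measure_mono hsub).trans hvol.le
  have hμfin : volume s < ⊤ :=
    hμle.trans_lt (by
      exact ENNReal.mul_lt_top ENNReal.ofReal_lt_top measure_ball_lt_top)
  set M : ℝ := 4 * Real.exp (-r) / r ^ 2 with hMdef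
  have hMnn : 0 ≤ M := by positivity
  have hbound : ∀ x ∈ s, ‖Real.exp (-2 * ‖x - y‖) / ‖x - y‖ ^ 2‖ ≤ M := by
    intro x hx
    obtain ⟨-, -, hxy⟩ := hx
    have hxy0 : 0 < ‖x - y‖ := lt_of_lt_of_le (by positivity) hxy
    have h1 : Real.exp (-2 * ‖x - y‖) ≤ Real.exp (-r) := by
      apply Real.exp_le_exp.2
      nlinarith
    have h2 : (r / 2) ^ 2 ≤ ‖x - y‖ ^ 2 := by
      apply pow_le_pow_left₀ (by positivity) hxy
    have h3 : Real.exp (-2 * ‖x - y‖) / ‖x - y‖ ^ 2 ≤ Real.exp (-r) / ((r/2) ^ 2) := by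
      apply div_le_div₀ (Real.exp_pos _).le h1 (by positivity) h2
    rw [Real.norm_eq_abs, abs_of_nonneg (by positivity)]
    refine h3.trans_eq ?_
    rw [hMdef]
    field_simp
    ring
  have hint : ‖∫ x in s, Real.exp (-2 * ‖x - y‖) / ‖x - y‖ ^ 2‖
      ≤ M * (volume s).toReal :=
    norm_setIntegral_le_of_norm_le_const hμfin hbound
  have hμReal : (volume s).toReal ≤ (2 * r) ^ 3 * B := by
    rw [hBdef]
    have := ENNReal.toReal_mono (by
      exact (ENNReal.mul_lt_top ENNReal.ofReal_lt_top measure_ball_lt_top).ne) hμle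
    rwa [ENNReal.toReal_mul, ENNReal.toReal_ofReal (by positivity)] at this
  have hchain : (∫ x in s, Real.exp (-2 * ‖x - y‖) / ‖x - y‖ ^ 2)
      ≤ M * ((2 * r) ^ 3 * B) := by
    calc (∫ x in s, Real.exp (-2 * ‖x - y‖) / ‖x - y‖ ^ 2)
        ≤ ‖∫ x in s, Real.exp (-2 * ‖x - y‖) / ‖x - y‖ ^ 2‖ := Real.le_norm_self _
      _ ≤ M * (volume s).toReal := hint
      _ ≤ M * ((2 * r) ^ 3 * B) := by
          exact mul_le_mul_of_nonneg_left hμReal hMnn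
  have hMeq : M * ((2 * r) ^ 3 * B) = 32 * B * (Real.exp (-r) * r) := by
    rw [hMdef]
    field_simp
    ring
  have hexp : Real.exp (-r) * r ≤ min 1 r := by
    refine le_min ?_ ?_
    · rw [Real.exp_neg]
      rw [inv_mul_eq_div]
      apply div_le_one_of_le₀ _ (Real.exp_pos _).le
      linarith [Real.add_one_le_exp r]
    · nlinarith [Real.exp_le_one_iff.2 (neg_nonpos.2 hr.le), Real.exp_pos (-r)]
  calc (∫ x in s, Real.exp (-2 * ‖x - y‖) / ‖x - y‖ ^ 2)
      ≤ 32 * B * (Real.exp (-r) * r) := by rw [← hMeq]; exact hchain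
    _ ≤ 32 * B * min 1 r := by
        exact mul_le_mul_of_nonneg_left hexp (by positivity)
end
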